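/- arXiv:1105.6170 — 3 statements merged into one kernel-verified Lean document; each statement's English description precedes it below -/
import Mathlib

section
/- Define, for positive integers M, N, k, a positive real β, and integer 1 ≤ p ≤ M, B(p) = ∑_{r=1}^{M-p+1} ((βp/k)^r / (1+βp/k)^{r+(N-1)k-1}) · (r+(N-1)k-1)!/(r!((N-1)k-1)!). Then for all 1 ≤ p ≤ M-1, B(p)/B(p+1) ≥ ((k+β(p+1))/(k+βp))^{(N-1)k-1} · ((β/k)/(1+β/k))^{M-p+1}. -/
open Finset

lemma aux_sum_ratio (m n n1 : ℕ) (hn1 : 1 ≤ n1) (hn : n1 ≤ n)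
    (a b c : ℝ) (ha : 0 < a) (hb : 0 < b) (hc : 0 < c) (hca : c ≤ a)
    (C : ℕ → ℝ) (hC : ∀ r, 0 < C r) :
    (∑ r ∈ Icc 1 n, a ^ r / (1 + a) ^ (r + m) * C r) /
      (∑ r ∈ Icc 1 n1, b ^ r / (1 + b) ^ (r + m) * C r) ≥
      ((1 + b) / (1 + a)) ^ m * (c / (1 + c)) ^ n := by
  have h1a : (0:ℝ) < 1 + a := by linarith
  have h1b : (0:ℝ) < 1 + b := by linarith
  have h1c : (0:ℝ) < 1 + c := by linarith
  have key : ∀ x : ℝ, ∀ r : ℕ, x ^ r / (1 + x) ^ (r + m) = (x / (1 + x)) ^ r / (1 + x) ^ m := by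
    intro x r
    rw [div_pow, pow_add, div_div]
  have hpos : 0 < ∑ r ∈ Icc 1 n1, b ^ r / (1 + b) ^ (r + m) * C r := by
    apply Finset.sum_pos
    · intro i _
      exact mul_pos (div_pos (pow_pos hb i) (pow_pos h1b _)) (hC i)
    · exact Finset.nonempty_Icc.mpr hn1
  have hub : (∑ r ∈ Icc 1 n1, b ^ r / (1 + b) ^ (r + m) * C r)
      ≤ 1 / (1 + b) ^ m * ∑ r ∈ Icc 1 n, C r := by
    rw [Finset.mul_sum]
    calc ∑ r ∈ Icc 1 n1, b ^ r / (1 + b) ^ (r + m) * C r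
        ≤ ∑ r ∈ Icc 1 n1, 1 / (1 + b) ^ m * C r := by
          apply Finset.sum_le_sum
          intro r _
          rw [key b r]
          apply mul_le_mul_of_nonneg_right _ (hC r).le
          apply div_le_div_of_nonneg_right _ (pow_pos h1b m).le
          exact pow_le_one₀ (by positivity) (by rw [div_le_one h1b]; linarith)
      _ ≤ ∑ r ∈ Icc 1 n, 1 / (1 + b) ^ m * C r := by
          apply Finset.sum_le_sum_of_subset_of_nonneg (Finset.Icc_subset_Icc_right hn)
          intro i _ _
          exact le_of_lt (mul_pos (by positivity) (hC i))
  have hlb : (c / (1 + c)) ^ n / (1 + a) ^ m * ∑ r ∈ Icc 1 n, C r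
      ≤ ∑ r ∈ Icc 1 n, a ^ r / (1 + a) ^ (r + m) * C r := by
    rw [Finset.mul_sum]
    apply Finset.sum_le_sum
    intro r hr
    obtain ⟨hr1, hr2⟩ := Finset.mem_Icc.mp hr
    rw [key a r]
    apply mul_le_mul_of_nonneg_right _ (hC r).le
    apply div_le_div_of_nonneg_right _ (pow_pos h1a m).le
    calc (c / (1 + c)) ^ n ≤ (c / (1 + c)) ^ r :=
          pow_le_pow_of_le_one (by positivity) (by rw [div_le_one h1c]; linarith) hr2
      _ ≤ (a / (1 + a)) ^ r := by
          apply pow_le_pow_left₀ (by positivity)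
          rw [div_le_div_iff₀ h1c h1a]
          nlinarith
  rw [ge_iff_le, le_div_iff₀ hpos]
  calc ((1 + b) / (1 + a)) ^ m * (c / (1 + c)) ^ n *
        ∑ r ∈ Icc 1 n1, b ^ r / (1 + b) ^ (r + m) * C r
      ≤ ((1 + b) / (1 + a)) ^ m * (c / (1 + c)) ^ n *
        (1 / (1 + b) ^ m * ∑ r ∈ Icc 1 n, C r) :=
        mul_le_mul_of_nonneg_left hub (by positivity)
    _ = (c / (1 + c)) ^ n / (1 + a) ^ m * ∑ r ∈ Icc 1 n, C r := by
        rw [div_pow]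
        field_simp
    _ ≤ _ := hlb

theorem stmt_7 (M N k : ℕ) (hM : 2 ≤ M) (hN : 2 ≤ N) (hk : 1 ≤ k) (β : ℝ) (hβ : 0 < β)
    (B : ℕ → ℝ)
    (hB : ∀ p, B p = ∑ r ∈ Finset.Icc 1 (M - p + 1),
      (β * p / k) ^ r / (1 + β * p / k) ^ (r + (N - 1) * k - 1) *
        ((r + (N - 1) * k - 1).factorial / (r.factorial * ((N - 1) * k - 1).factorial))) :
    ∀ p, 1 ≤ p → p ≤ M - 1 →
      B p / B (p + 1) ≥
        ((k + β * (p + 1)) / (k + β * p)) ^ ((N - 1) * k - 1) *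
          ((β / k) / (1 + β / k)) ^ (M - p + 1) := by
  intro p hp1 hp2
  have hkR : (0:ℝ) < k := by exact_mod_cast hk
  have hpR : (1:ℝ) ≤ (p:ℝ) := by exact_mod_cast hp1
  have hK : 1 ≤ (N - 1) * k :=
    Nat.one_le_iff_ne_zero.mpr (Nat.mul_ne_zero (by omega) (by omega))
  have ha : (0:ℝ) < β * p / k := div_pos (mul_pos hβ (by linarith)) hkR
  have hb : (0:ℝ) < β * (p + 1) / k := div_pos (mul_pos hβ (by linarith)) hkR
  have hc : (0:ℝ) < β / k := div_pos hβ hkR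
  have hca : β / k ≤ β * p / k := by
    apply div_le_div_of_nonneg_right _ hkR.le
    nlinarith
  have hCpos : ∀ r : ℕ,
      (0:ℝ) < ((r + ((N - 1) * k - 1)).factorial : ℝ) /
        ((r.factorial : ℝ) * (((N - 1) * k - 1).factorial : ℝ)) := by
    intro r
    exact div_pos (Nat.cast_pos.mpr (Nat.factorial_pos _))
      (mul_pos (Nat.cast_pos.mpr (Nat.factorial_pos _)) (Nat.cast_pos.mpr (Nat.factorial_pos _)))
  have e1 : B p = ∑ r ∈ Finset.Icc 1 (M - p + 1),
      (β * p / k) ^ r / (1 + β * p / k) ^ (r + ((N - 1) * k - 1)) *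
        (((r + ((N - 1) * k - 1)).factorial : ℝ) /
          ((r.factorial : ℝ) * (((N - 1) * k - 1).factorial : ℝ))) := by
    rw [hB p]
    refine Finset.sum_congr rfl fun r hr => ?_
    rw [Nat.add_sub_assoc hK r]
  have hidx : M - (p + 1) + 1 = M - p := by omega
  have e2 : B (p + 1) = ∑ r ∈ Finset.Icc 1 (M - p),
      (β * (p + 1) / k) ^ r / (1 + β * (p + 1) / k) ^ (r + ((N - 1) * k - 1)) *
        (((r + ((N - 1) * k - 1)).factorial : ℝ) /
          ((r.factorial : ℝ) * (((N - 1) * k - 1).factorial : ℝ))) := by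
    rw [hB (p + 1), hidx]
    refine Finset.sum_congr rfl fun r hr => ?_
    rw [Nat.add_sub_assoc hK r]
    push_cast
    ring
  have hkp : (0:ℝ) < (k:ℝ) + β * p := by nlinarith
  have e3 : ((k:ℝ) + β * (p + 1)) / ((k:ℝ) + β * p)
      = (1 + β * (p + 1) / k) / (1 + β * p / k) := by
    rw [div_eq_div_iff hkp.ne' (by positivity)]
    field_simp
  rw [e1, e2, e3]
  exact aux_sum_ratio ((N - 1) * k - 1) (M - p + 1) (M - p) (by omega) (by omega)
    (β * p / k) (β * (p + 1) / k) (β / k) ha hb hc hca _ hCpos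
end

section
/- With B(p) defined as in the ZF outage setting, for every integer 1 ≤ p ≤ M-1 there exists N₀ such that for all N ≥ N₀, B(p)/B(p+1) ≥ (p+1)/p; consequently p·B(p) ≥ (p+1)·B(p+1), i.e., p ↦ p·B(p) is decreasing for N large. -/
open Filter Finset

theorem stmt_8 (M k : ℕ) (hM : 2 ≤ M) (hk : 1 ≤ k) (β : ℝ) (hβ : 0 < β)
    (B : ℕ → ℕ → ℝ)
    (hB : ∀ N p, B N p = ∑ r ∈ Finset.Icc 1 (M - p + 1),
      (β * p / k) ^ r / (1 + β * p / k) ^ (r + (N - 1) * k - 1) *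
        ((r + (N - 1) * k - 1).factorial / (r.factorial * ((N - 1) * k - 1).factorial))) :
    ∀ p : ℕ, 1 ≤ p → p ≤ M - 1 →
      ∃ N₀ : ℕ, ∀ N : ℕ, N₀ ≤ N →
        B N p / B N (p + 1) ≥ (p + 1) / p ∧
          p * B N p ≥ (p + 1) * B N (p + 1) := by
  intro p hp1 hpM
  have hk0 : (0:ℝ) < k := by exact_mod_cast Nat.lt_of_lt_of_le Nat.zero_lt_one hk
  have hp0 : (0:ℝ) < p := by exact_mod_cast Nat.lt_of_lt_of_le Nat.zero_lt_one hp1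
  set x : ℝ := β * p / k with hxdef
  set y : ℝ := β * (p+1) / k with hydef
  have hx : 0 < x := by positivity
  have hxy : x < y := by
    rw [hxdef, hydef, div_lt_div_iff₀ hk0 hk0]
    nlinarith
  have hy : 0 < y := hx.trans hxy
  set q : ℝ := (1+y)/(1+x) with hqdef
  have hq : 1 < q := by
    rw [hqdef, lt_div_iff₀ (by linarith)]; linarith
  have hq0 : 0 < q := by linarith
  set R : ℕ := M - p with hRdef
  have hR : 1 ≤ R := by omega
  have hR0 : (0:ℝ) < R := by exact_mod_cast hR
  set D : ℝ := ((p:ℝ)+1)/p * R * ((1+x)/x) * 2^R with hDdef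
  have hD : 0 < D := by positivity
  -- eventual domination of polynomial by q^m
  have hlim : Tendsto (fun m : ℕ => (m:ℝ)^R / q^m) atTop (nhds 0) :=
    tendsto_pow_const_div_const_pow_of_one_lt R hq
  have hev : ∀ᶠ m : ℕ in atTop, (m:ℝ)^R / q^m < 1/D :=
    hlim.eventually_lt_const (by positivity)
  obtain ⟨m₀, hm₀⟩ := eventually_atTop.mp hev
  refine ⟨m₀ + R + 2, fun N hN => ?_⟩
  set A : ℕ := (N-1)*k with hAdef
  have hA : 1 ≤ A := by
    have : 1 ≤ N - 1 := by omega
    calc 1 = 1 * 1 := by ring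
    _ ≤ (N-1) * k := Nat.mul_le_mul this hk
  set m : ℕ := A - 1 with hmdef
  have hmA : A = m + 1 := by omega
  have hmge : m₀ + R ≤ m := by
    have h1 : N - 1 ≤ A := by
      calc N - 1 = (N-1) * 1 := by ring
      _ ≤ (N-1) * k := Nat.mul_le_mul_left _ hk
    omega
  have hmR : R ≤ m := by omega
  have hm1 : (1:ℝ) ≤ m := by exact_mod_cast (by omega : 1 ≤ m)
  -- the key multiplied inequality
  have hDm : D * (m:ℝ)^R ≤ q^m := by
    have := hm₀ m (by omega)
    rw [div_lt_iff₀ (by positivity), div_mul_eq_mul_div, lt_div_iff₀ hD] at this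
    linarith [this]
  -- upper bound on B N (p+1)
  have hIcc : M - (p+1) + 1 = R := by omega
  have hup : B N (p+1) ≤ (R:ℝ) * (((m:ℝ)+R)^R / (1+y)^m) := by
    rw [hB, hIcc]
    have := Finset.sum_le_card_nsmul (Finset.Icc 1 R)
      (fun r => (β * (p+1) / k) ^ r / (1 + β * (p+1) / k) ^ (r + (N - 1) * k - 1) *
        ((r + (N - 1) * k - 1).factorial / (r.factorial * ((N - 1) * k - 1).factorial)))
      (((m:ℝ)+R)^R / (1+y)^m) ?_
    · simpa [Nat.card_Icc, nsmul_eq_mul] using this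
    intro r hr
    simp only [Finset.mem_Icc] at hr
    have hrA : r + (N-1)*k - 1 = r + m := by omega
    have hAm : (N-1)*k - 1 = m := rfl
    rw [hrA, hAm]
    push_cast
    have hchoose : ((r + m).factorial : ℝ) / (r.factorial * m.factorial)
        = ((r + m).choose r : ℝ) := by
      rw [Nat.cast_choose ℝ (Nat.le_add_right r m)]
      simp
    rw [hchoose]
    have hc2 : ((r + m).choose r : ℝ) ≤ ((m:ℝ)+R)^R := by
      have h1 : (r + m).choose r ≤ (m + R)^R := by
        calc (r + m).choose r ≤ (r + m)^r := Nat.choose_le_pow _ _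
        _ ≤ (m + R)^r := Nat.pow_le_pow_left (by omega) _
        _ ≤ (m + R)^R := Nat.pow_le_pow_right (by omega) (by omega)
      calc ((r + m).choose r : ℝ) ≤ ((m + R : ℕ) : ℝ)^R := by exact_mod_cast h1
      _ = ((m:ℝ)+R)^R := by push_cast; ring
    have hfrac : y^r / (1+y)^(r+m) ≤ 1 / (1+y)^m := by
      rw [pow_add, div_le_div_iff₀ (by positivity) (by positivity), one_mul]
      have : y^r ≤ (1+y)^r := by
        apply pow_le_pow_left₀ (le_of_lt hy); linarith
      nlinarith [pow_pos (show (0:ℝ) < 1+y by linarith) m, pow_pos hy r]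
    calc y^r / (1+y)^(r+m) * ((r + m).choose r : ℝ)
        ≤ (1 / (1+y)^m) * (((m:ℝ)+R)^R) := by
          apply mul_le_mul hfrac hc2 (by positivity) (by positivity)
      _ = ((m:ℝ)+R)^R / (1+y)^m := by ring
  -- lower bound on B N p
  have hlow : x / (1+x)^(m+1) ≤ B N p := by
    rw [hB]
    have h1mem : 1 ∈ Finset.Icc 1 (M - p + 1) := by simp
    have := Finset.single_le_sum (f := fun r => (β * p / k) ^ r / (1 + β * p / k) ^ (r + (N - 1) * k - 1) *
        ((r + (N - 1) * k - 1).factorial / (r.factorial * ((N - 1) * k - 1).factorial)))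
      (fun r _ => by positivity) h1mem
    refine le_trans ?_ this
    have h1A : 1 + (N-1)*k - 1 = m + 1 := by omega
    have hAm : (N-1)*k - 1 = m := rfl
    simp only [h1A, hAm, pow_one, Nat.factorial_one, Nat.cast_one, one_mul]
    have hfpos : (0:ℝ) < m.factorial := by exact_mod_cast m.factorial_pos
    have hfe : ((m+1).factorial : ℝ) / (m.factorial : ℝ) = (m:ℝ)+1 := by
      rw [Nat.factorial_succ]; push_cast; field_simp
    rw [hfe]
    show x / (1+x)^(m+1) ≤ x / (1+x)^(m+1) * ((m:ℝ)+1)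
    have h2 : x / (1+x)^(m+1) * 1 ≤ x / (1+x)^(m+1) * ((m:ℝ)+1) := by
      apply mul_le_mul_of_nonneg_left (by linarith) (by positivity)
    simpa using h2
  -- positivity of B N (p+1)
  have hB1pos : 0 < B N (p+1) := by
    rw [hB]
    apply Finset.sum_pos
    · intro r hr
      have : (0:ℝ) < (r + (N - 1) * k - 1).factorial := by exact_mod_cast Nat.factorial_pos _
      have h2 : (0:ℝ) < (r).factorial := by exact_mod_cast Nat.factorial_pos _
      have h3 : (0:ℝ) < ((N - 1) * k - 1).factorial := by exact_mod_cast Nat.factorial_pos _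
      positivity
    · exact ⟨1, by simp⟩
  -- key inequality
  have hkey : ((p:ℝ)+1) * B N (p+1) ≤ (p:ℝ) * B N p := by
    calc ((p:ℝ)+1) * B N (p+1) ≤ ((p:ℝ)+1) * ((R:ℝ) * (((m:ℝ)+R)^R / (1+y)^m)) := by
          apply mul_le_mul_of_nonneg_left hup (by positivity)
      _ ≤ (p:ℝ) * (x / (1+x)^(m+1)) := ?_
      _ ≤ (p:ℝ) * B N p := mul_le_mul_of_nonneg_left hlow (by positivity)
    rw [show ((p:ℝ)+1) * ((R:ℝ) * (((m:ℝ)+R)^R / (1+y)^m))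
        = (((p:ℝ)+1) * R * ((m:ℝ)+R)^R) / (1+y)^m by ring,
      show (p:ℝ) * (x / (1+x)^(m+1)) = ((p:ℝ) * x) / (1+x)^(m+1) by ring,
      div_le_div_iff₀ (by positivity) (by positivity)]
    calc ((p:ℝ)+1) * R * ((m:ℝ)+R)^R * (1+x)^(m+1)
        ≤ ((p:ℝ)+1) * R * (2^R * (m:ℝ)^R) * (1+x)^(m+1) := by
          have h1 : ((m:ℝ)+R)^R ≤ (2*(m:ℝ))^R := by
            apply pow_le_pow_left₀ (by positivity)
            have : (R:ℝ) ≤ m := by exact_mod_cast hmR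
            linarith
          have h2 : (2*(m:ℝ))^R = 2^R * (m:ℝ)^R := by rw [mul_pow]
          rw [← h2]
          apply mul_le_mul_of_nonneg_right _ (by positivity)
          apply mul_le_mul_of_nonneg_left h1 (by positivity)
      _ = ((p:ℝ) * x) * (D * (m:ℝ)^R) * (1+x)^m := by
          rw [hDdef]; field_simp; ring
      _ ≤ ((p:ℝ) * x) * q^m * (1+x)^m := by
          apply mul_le_mul_of_nonneg_right _ (by positivity)
          apply mul_le_mul_of_nonneg_left hDm (by positivity)
      _ = (p:ℝ) * x * (1+y)^m := by
          rw [hqdef, mul_assoc, ← mul_pow, div_mul_cancel₀]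
          linarith
  constructor
  · rw [ge_iff_le, div_le_div_iff₀ hp0 hB1pos]
    linarith
  · exact hkey
end

section
/- For the ZF outage capacity C_n(k_n) = R·k_n·∑_{r=1}^{M-k_n+1} ((βk_n/k)^r/(1+βk_n/k)^{r+(N-1)k-1})·(r+(N-1)k-1)!/(r!((N-1)k-1)!), there exists N* such that for all N ≥ N*, C_n is maximized over k_n ∈ {1,…,M} at k_n = 1. -/
set_option maxHeartbeats 1000000 in
theorem stmt_9 (M k : ℕ) (hM : 1 ≤ M) (hk : 1 ≤ k) (β R : ℝ) (hβ : 0 < β) (hR : 0 < R)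
    (C : ℕ → ℕ → ℝ)
    (hC : ∀ N kn, C N kn = R * kn * ∑ r ∈ Finset.Icc 1 (M - kn + 1),
      (β * kn / k) ^ r / (1 + β * kn / k) ^ (r + (N - 1) * k - 1) *
        ((r + (N - 1) * k - 1).factorial / (r.factorial * ((N - 1) * k - 1).factorial))) :
    ∃ Nstar : ℕ, ∀ N : ℕ, Nstar ≤ N → ∀ kn ∈ Finset.Icc 1 M, C N kn ≤ C N 1 := by
  have hk0 : (0:ℝ) < k := by exact_mod_cast hk
  have hM0 : (0:ℝ) < M := by exact_mod_cast hM
  set a : ℝ := β / k with ha_def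
  have ha : 0 < a := div_pos hβ hk0
  set q : ℝ := (1 + a) / (1 + 2 * a) with hq_def
  have hq0 : 0 < q := by positivity
  have hq1 : q < 1 := by
    rw [hq_def, div_lt_one (by linarith)]; linarith
  set K : ℝ := (max 1 (a * M)) ^ M with hK_def
  have hK1 : (1:ℝ) ≤ K := by
    rw [hK_def]
    calc (1:ℝ) = 1 ^ M := (one_pow M).symm
    _ ≤ (max 1 (a * M)) ^ M := pow_le_pow_left₀ zero_le_one (le_max_left _ _) M
  have hK0 : (0:ℝ) < K := lt_of_lt_of_le one_pos hK1
  set ε : ℝ := (a / (1 + a)) / ((M:ℝ) ^ 2 * K) with hε_def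
  have hε : 0 < ε := by
    apply div_pos (div_pos ha (by linarith)) (by positivity)
  -- the decaying quantity
  have htend : Filter.Tendsto (fun n : ℕ => (n:ℝ) ^ M * q ^ n) Filter.atTop (nhds 0) :=
    tendsto_pow_const_mul_const_pow_of_lt_one M hq0.le hq1
  have htend2 : Filter.Tendsto (fun m : ℕ => ((m:ℝ) + M) ^ M * q ^ m) Filter.atTop (nhds 0) := by
    have h3 : Filter.Tendsto (fun m : ℕ => ((m + M : ℕ):ℝ) ^ M * q ^ (m + M))
        Filter.atTop (nhds 0) := htend.comp (Filter.tendsto_add_atTop_nat M)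
    have h4 := h3.mul_const ((q ^ M)⁻¹)
    rw [zero_mul] at h4
    refine h4.congr fun m => ?_
    push_cast
    rw [pow_add]
    field_simp
  have hev : ∀ᶠ (m : ℕ) in Filter.atTop, ((m:ℝ) + M) ^ M * q ^ m < ε :=
    htend2.eventually_lt_const hε
  obtain ⟨m0, hm0⟩ := Filter.eventually_atTop.mp hev
  refine ⟨m0 + 2, fun N hN kn hkn => ?_⟩
  rw [Finset.mem_Icc] at hkn
  rcases eq_or_lt_of_le hkn.1 with h1 | hkn2
  · rw [← h1]
  · -- 2 ≤ kn
    have hmul : 1 ≤ (N - 1) * k := Nat.mul_pos (by omega) hk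
    set m : ℕ := (N - 1) * k - 1 with hm_def
    have hmk : (N - 1) * k = m + 1 := by omega
    have hm0le : m0 ≤ m := by
      have h5 : N - 1 ≤ (N - 1) * k := Nat.le_mul_of_pos_right _ hk
      omega
    have hg := (hm0 m hm0le).le
    -- positivity facts
    have h1a : (0:ℝ) < 1 + a := by linarith
    have h2a : (0:ℝ) < 1 + 2 * a := by linarith
    have hknR : (2:ℝ) ≤ kn := by exact_mod_cast hkn2
    have hknM : (kn:ℝ) ≤ M := by exact_mod_cast hkn.2
    set x : ℝ := β * kn / k with hx_def
    have hxa : x = a * kn := by rw [hx_def, ha_def]; ring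
    have hx0 : 0 < x := by rw [hxa]; positivity
    have hx2a : 1 + 2 * a ≤ 1 + x := by
      rw [hxa]; nlinarith
    set Bd : ℝ := K / (1 + 2 * a) ^ m * ((m:ℝ) + M) ^ M with hBd_def
    have hBd0 : 0 ≤ Bd := by positivity
    -- bound each term of C N kn
    have hterm : ∀ r ∈ Finset.Icc 1 (M - kn + 1),
        x ^ r / (1 + x) ^ (r + m) *
          (((r + m).factorial : ℝ) / ((r.factorial : ℝ) * (m.factorial : ℝ))) ≤ Bd := by
      intro r hr
      rw [Finset.mem_Icc] at hr
      have hrM : r ≤ M := by omega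
      have hfac : (((r + m).factorial : ℝ) / ((r.factorial : ℝ) * (m.factorial : ℝ)))
          = ((r + m).choose r : ℝ) := by
        rw [Nat.cast_choose ℝ (Nat.le_add_right r m), Nat.add_sub_cancel_left]
      rw [hfac, hBd_def]
      have hchoose : ((r + m).choose r : ℝ) ≤ ((m:ℝ) + M) ^ M := by
        calc ((r + m).choose r : ℝ) ≤ ((r + m : ℕ) : ℝ) ^ r := by
              exact_mod_cast Nat.choose_le_pow (r + m) r
        _ ≤ ((m:ℝ) + M) ^ r := by
              apply pow_le_pow_left₀ (by positivity)
              push_cast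
              have : (r:ℝ) ≤ M := by exact_mod_cast hrM
              linarith
        _ ≤ ((m:ℝ) + M) ^ M := by
              apply pow_le_pow_right₀ (by linarith [Nat.cast_nonneg (α := ℝ) m]) hrM
      have hfrac : x ^ r / (1 + x) ^ (r + m) ≤ K / (1 + 2 * a) ^ m := by
        apply div_le_div₀ hK0.le _ (by positivity) _
        · rw [hK_def, hxa]
          calc (a * kn) ^ r ≤ (max 1 (a * M)) ^ r := by
                apply pow_le_pow_left₀ (by positivity)
                exact le_trans (by nlinarith) (le_max_right 1 (a * M))
          _ ≤ (max 1 (a * M)) ^ M := pow_le_pow_right₀ (le_max_left _ _) hrM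
        · calc (1 + 2 * a) ^ m ≤ (1 + x) ^ m := pow_le_pow_left₀ h2a.le hx2a m
          _ ≤ (1 + x) ^ (r + m) := pow_le_pow_right₀ (by linarith) (by omega)
      exact mul_le_mul hfrac hchoose (by positivity) (by positivity)
    -- rewrite C N kn and bound
    have hCkn : C N kn ≤ R * M * ((M:ℝ) * Bd) := by
      rw [hC N kn]
      simp only [hmk, Nat.add_succ_sub_one, Nat.add_sub_cancel, ← hx_def]
      have hsum : ∑ r ∈ Finset.Icc 1 (M - kn + 1),
          x ^ r / (1 + x) ^ (r + m) *
            (((r + m).factorial : ℝ) / ((r.factorial : ℝ) * (m.factorial : ℝ)))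
          ≤ (M - kn + 1 : ℕ) • Bd := Finset.sum_le_card_nsmul _ _ _ hterm |>.trans_eq (by
            rw [Nat.card_Icc]; norm_num)
      rw [nsmul_eq_mul] at hsum
      have hcard : ((M - kn + 1 : ℕ) : ℝ) ≤ (M:ℝ) := by
        exact_mod_cast (by omega : M - kn + 1 ≤ M)
      calc R * kn * (∑ r ∈ Finset.Icc 1 (M - kn + 1),
            x ^ r / (1 + x) ^ (r + m) *
              (((r + m).factorial : ℝ) / ((r.factorial : ℝ) * (m.factorial : ℝ))))
          ≤ R * kn * (((M - kn + 1 : ℕ) : ℝ) * Bd) := by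
            apply mul_le_mul_of_nonneg_left hsum (mul_nonneg hR.le (Nat.cast_nonneg kn))
        _ ≤ R * M * ((M:ℝ) * Bd) := by
            apply mul_le_mul (mul_le_mul_of_nonneg_left hknM hR.le)
              (mul_le_mul_of_nonneg_right hcard hBd0)
              (mul_nonneg (Nat.cast_nonneg _) hBd0) (mul_nonneg hR.le hM0.le)
    -- lower bound C N 1
    have hC1 : R * (a / (1 + a) * (1 / (1 + a) ^ m)) ≤ C N 1 := by
      rw [hC N 1]
      have hM1 : M - 1 + 1 = M := by omega
      simp only [hmk, Nat.add_succ_sub_one, Nat.add_sub_cancel, hM1, Nat.cast_one, mul_one]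
      rw [← ha_def]
      have hterm1 : a / (1 + a) * (1 / (1 + a) ^ m) ≤
          a ^ 1 / (1 + a) ^ (1 + m) *
            (((1 + m).factorial : ℝ) / (((1:ℕ).factorial : ℝ) * (m.factorial : ℝ))) := by
        have e2 : (((1 + m).factorial : ℝ) / (((1:ℕ).factorial : ℝ) * (m.factorial : ℝ)))
            = ((m:ℝ) + 1) := by
          rw [show 1 + m = m + 1 by ring, Nat.factorial_succ, Nat.factorial_one]
          push_cast
          field_simp [Nat.factorial_ne_zero]
        rw [e2, pow_one, pow_add, pow_one, div_mul_div_comm, mul_one]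
        exact le_mul_of_one_le_right (by positivity)
          (by linarith [Nat.cast_nonneg (α := ℝ) m])
      have hsingle : a ^ 1 / (1 + a) ^ (1 + m) *
            (((1 + m).factorial : ℝ) / (((1:ℕ).factorial : ℝ) * (m.factorial : ℝ)))
          ≤ ∑ r ∈ Finset.Icc 1 M,
            a ^ r / (1 + a) ^ (r + m) *
              (((r + m).factorial : ℝ) / ((r.factorial : ℝ) * (m.factorial : ℝ))) :=
        Finset.single_le_sum (f := fun r => a ^ r / (1 + a) ^ (r + m) *
              (((r + m).factorial : ℝ) / ((r.factorial : ℝ) * (m.factorial : ℝ))))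
          (fun i _ => by positivity)
          (Finset.mem_Icc.mpr ⟨le_refl 1, hM⟩)
      exact mul_le_mul_of_nonneg_left (hterm1.trans hsingle) hR.le
    -- middle inequality from hg
    have hkey : R * M * ((M:ℝ) * Bd) ≤ R * (a / (1 + a) * (1 / (1 + a) ^ m)) := by
      have h6 : 0 ≤ (M:ℝ) ^ 2 * K / (1 + a) ^ m := by positivity
      have h7 := mul_le_mul_of_nonneg_right hg h6
      have e1 : ((m:ℝ) + M) ^ M * q ^ m * ((M:ℝ) ^ 2 * K / (1 + a) ^ m)
          = (M:ℝ) ^ 2 * K * (((m:ℝ) + M) ^ M / (1 + 2 * a) ^ m) := by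
        rw [hq_def, div_pow]
        field_simp
      have e2 : ε * ((M:ℝ) ^ 2 * K / (1 + a) ^ m) = a / (1 + a) * (1 / (1 + a) ^ m) := by
        rw [hε_def]
        field_simp
      rw [e1, e2] at h7
      calc R * M * ((M:ℝ) * Bd) = R * ((M:ℝ) ^ 2 * K * (((m:ℝ) + M) ^ M / (1 + 2 * a) ^ m)) := by
            rw [hBd_def]; field_simp
        _ ≤ R * (a / (1 + a) * (1 / (1 + a) ^ m)) := mul_le_mul_of_nonneg_left h7 hR.le
    exact hCkn.trans (hkey.trans hC1)
end
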